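/- (Every term of the zigzag reaches the common reduct) Let M₀ =β M_k via a zigzag [M₀, M₁, …, M_k] with r forward arrows in total, and let m_l be the number of backward arrows among the first r arrows. Then every term M_i (0 ≤ i ≤ k) in the zigzag satisfies M_i ↠ M_r^(m_l*); i.e., M_r^(m_l*) is a common reduct of all terms appearing in the zigzag. -/

import Mathlib

inductive Lam : Type
  | var : ℕ → Lam
  | lam : Lam → Lam
  | app : Lam → Lam → Lam
  deriving DecidableEq

namespace Lam

/-- term size -/
def size : Lam → ℕ
  | var _ => 1
  | lam M => 1 + M.size
  | app M N => 1 + M.size + N.size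

/-- lift (shift) free variables ≥ d by 1 -/
def lift (d : ℕ) : Lam → Lam
  | var n => if n < d then var n else var (n+1)
  | lam M => lam (M.lift (d+1))
  | app M N => app (M.lift d) (N.lift d)

/-- capture-avoiding substitution of N for the free variable x (de Bruijn) -/
def subst : Lam → ℕ → Lam → Lam
  | var n, x, N => if n = x then N else if x < n then var (n-1) else var n
  | lam M, x, N => lam (M.subst (x+1) (N.lift 0))
  | app M P, x, N => app (M.subst x N) (P.subst x N)

/-- number of free occurrences of the variable x -/
def count : Lam → ℕ → ℕ
  | var n, x => if n = x then 1 else 0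
  | lam M, x => M.count (x+1)
  | app M N, x => M.count x + N.count x

/-- one-step β-reduction -/
inductive Step : Lam → Lam → Prop
  | beta (M N : Lam) : Step (app (lam M) N) (M.subst 0 N)
  | appL {M M' : Lam} (N : Lam) : Step M M' → Step (app M N) (app M' N)
  | appR (M : Lam) {N N' : Lam} : Step N N' → Step (app M N) (app M N')
  | abs {M M' : Lam} : Step M M' → Step (lam M) (lam M')

/-- many-step β-reduction (reflexive-transitive closure) -/
def Red : Lam → Lam → Prop := Relation.ReflTransGen Step

/-- n-step β-reduction -/
def Steps : ℕ → Lam → Lam → Prop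
  | 0, M, N => M = N
  | n+1, M, N => ∃ P, Step M P ∧ Steps n P N

/-- Takahashi translation (Gross-Knuth complete development) -/
def star : Lam → Lam
  | var n => var n
  | lam M => lam (star M)
  | app (lam M) N => (star M).subst 0 (star N)
  | app (var n) N => app (var n) (star N)
  | app (app M₁ M₂) N => app (star (app M₁ M₂)) (star N)

/-- iterated Takahashi translation M^(n*) -/
def iterStar (n : ℕ) (M : Lam) : Lam := star^[n] M

end Lam

namespace Lam

theorem red_appL {M M'} (N) (h : Red M M') : Red (app M N) (app M' N) := by
  induction h with
  | refl => exact .refl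
  | tail _ s ih => exact ih.tail (Step.appL N s)

theorem red_appR (M) {N N'} (h : Red N N') : Red (app M N) (app M N') := by
  induction h with
  | refl => exact .refl
  | tail _ s ih => exact ih.tail (Step.appR M s)

theorem red_app {M M' N N'} (h1 : Red M M') (h2 : Red N N') : Red (app M N) (app M' N') :=
  Relation.ReflTransGen.trans (red_appL N h1) (red_appR M' h2)

theorem red_lam {M M'} (h : Red M M') : Red (lam M) (lam M') := by
  induction h with
  | refl => exact .refl
  | tail _ s ih => exact ih.tail (Step.abs s)

theorem lift_lift (M : Lam) : ∀ d e, e ≤ d → (M.lift e).lift (d+1) = (M.lift d).lift e := by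
  induction M with
  | var n =>
    intro d e h
    simp only [lift]
    split_ifs <;> simp only [lift] <;> split_ifs <;>
      first | rfl | (exfalso; omega) | (simp only [Lam.var.injEq]; omega)
  | lam M ih =>
    intro d e h
    exact congrArg lam (ih (d+1) (e+1) (by omega))
  | app M N ihM ihN =>
    intro d e h
    simp only [lift, ihM d e h, ihN d e h]

/-- x ≤ d → lift d (A.subst x B) = (A.lift (d+1)).subst x (B.lift d) -/
theorem lift_subst_ge (A : Lam) : ∀ x B d, x ≤ d →
    (A.subst x B).lift d = (A.lift (d+1)).subst x (B.lift d) := by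
  induction A with
  | var n =>
    intro x B d h
    simp only [subst, lift]
    split_ifs <;> simp only [lift, subst] <;> split_ifs <;>
      first | rfl | (exfalso; omega) | (simp only [Lam.var.injEq]; omega)
  | lam A ih =>
    intro x B d h
    simp only [subst, lift]
    rw [ih (x+1) (B.lift 0) (d+1) (by omega), lift_lift B d 0 (by omega)]
  | app A₁ A₂ ih1 ih2 =>
    intro x B d h
    simp only [subst, lift, ih1 x B d h, ih2 x B d h]

/-- d ≤ x → lift d (A.subst x B) = (A.lift d).subst (x+1) (B.lift d) -/
theorem lift_subst_le (A : Lam) : ∀ x B d, d ≤ x →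
    (A.subst x B).lift d = (A.lift d).subst (x+1) (B.lift d) := by
  induction A with
  | var n =>
    intro x B d h
    simp only [subst, lift]
    split_ifs <;> simp only [lift, subst] <;> split_ifs <;>
      first | rfl | (exfalso; omega) | (simp only [Lam.var.injEq]; omega)
  | lam A ih =>
    intro x B d h
    simp only [subst, lift]
    rw [ih (x+1) (B.lift 0) (d+1) (by omega), lift_lift B d 0 (by omega)]
  | app A₁ A₂ ih1 ih2 =>
    intro x B d h
    simp only [subst, lift, ih1 x B d h, ih2 x B d h]

theorem subst_lift (M : Lam) : ∀ d N, (M.lift d).subst d N = M := by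
  induction M with
  | var n =>
    intro d N
    simp only [lift]
    split_ifs <;> simp only [subst] <;> split_ifs <;>
      first | rfl | (exfalso; omega) | (simp only [Lam.var.injEq]; omega)
  | lam M ih =>
    intro d N
    simp only [lift, subst, ih (d+1)]
  | app M P ih1 ih2 =>
    intro d N
    simp only [lift, subst, ih1, ih2]

/-- y ≤ x → (A.subst y B).subst x C = (A.subst (x+1) (C.lift y)).subst y (B.subst x C) -/
theorem subst_subst (A : Lam) : ∀ y x B C, y ≤ x →
    (A.subst y B).subst x C = (A.subst (x+1) (C.lift y)).subst y (B.subst x C) := by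
  induction A with
  | var n =>
    intro y x B C h
    simp only [subst]
    split_ifs <;> (try simp only [subst]) <;> (try split_ifs) <;>
      first
      | rfl
      | (exfalso; omega)
      | (simp only [Lam.var.injEq]; omega)
      | (rw [subst_lift])
  | lam A ih =>
    intro y x B C h
    simp only [subst]
    rw [ih (y+1) (x+1) (B.lift 0) (C.lift 0) (by omega),
        lift_lift C y 0 (by omega),
        ← lift_subst_le B x C 0 (Nat.zero_le x)]
  | app A₁ A₂ ih1 ih2 =>
    intro y x B C h
    simp only [subst, ih1 y x B C h, ih2 y x B C h]

end Lam

namespace Lam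

theorem star_lift (M : Lam) : ∀ d, star (M.lift d) = (star M).lift d := by
  induction M with
  | var n => intro d; simp only [lift, star]; split_ifs <;> simp [star, lift, *]
  | lam M ih => intro d; simp only [lift, star, ih]
  | app M N ihM ihN =>
    intro d
    cases M with
    | var n =>
      simp only [lift, star]
      split_ifs <;> simp [star, lift, *, ihN]
    | lam P =>
      have hP : star (P.lift (d+1)) = (star P).lift (d+1) := by
        have := ihM d
        simpa [lift, star] using this
      simp only [lift, star, ihN, hP]
      exact (lift_subst_ge (star P) 0 (star N) d (Nat.zero_le d)).symm
    | app A B =>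
      simp only [lift, star, ihN]
      have := ihM d
      simp only [lift] at this
      rw [this]

theorem step_lift {M N : Lam} (h : Step M N) : ∀ d, Step (M.lift d) (N.lift d) := by
  induction h with
  | beta M N =>
    intro d
    have : (M.subst 0 N).lift d = (M.lift (d+1)).subst 0 (N.lift d) :=
      lift_subst_ge M 0 N d (Nat.zero_le d)
    rw [this]
    exact .beta _ _
  | appL N _ ih => intro d; exact .appL _ (ih d)
  | appR M _ ih => intro d; exact .appR _ (ih d)
  | abs _ ih => intro d; exact .abs (ih (d+1))

theorem step_subst_left {A A' : Lam} (h : Step A A') :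
    ∀ x B, Step (A.subst x B) (A'.subst x B) := by
  induction h with
  | beta M N =>
    intro x B
    have : (M.subst 0 N).subst x B
        = (M.subst (x+1) (B.lift 0)).subst 0 (N.subst x B) :=
      subst_subst M 0 x N B (Nat.zero_le x)
    rw [this]
    simp only [subst]
    exact .beta _ _
  | appL N _ ih => intro x B; exact .appL _ (ih x B)
  | appR M _ ih => intro x B; exact .appR _ (ih x B)
  | abs _ ih => intro x B; exact .abs (ih (x+1) _)

theorem red_subst_left {A A' : Lam} (h : Red A A') (x : ℕ) (B : Lam) :
    Red (A.subst x B) (A'.subst x B) := by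
  induction h with
  | refl => exact .refl
  | tail _ s ih => exact ih.tail (step_subst_left s x B)

theorem red_subst_right (A : Lam) : ∀ {B B'} (_ : Step B B') (x : ℕ),
    Red (A.subst x B) (A.subst x B') := by
  induction A with
  | var n =>
    intro B B' h x
    simp only [subst]
    split_ifs <;> first | exact Relation.ReflTransGen.single h | exact .refl
  | lam A ih =>
    intro B B' h x
    simp only [subst]
    exact red_lam (ih (step_lift h 0) (x+1))
  | app A P ih1 ih2 =>
    intro B B' h x
    exact red_app (ih1 h x) (ih2 h x)

theorem red_subst {A A' B B' : Lam} (h1 : Red A A') (h2 : Red B B') (x : ℕ) :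
    Red (A.subst x B) (A'.subst x B') := by
  refine Relation.ReflTransGen.trans (red_subst_left h1 x B) ?_
  induction h2 with
  | refl => exact .refl
  | tail _ s ih => exact ih.trans (red_subst_right A' s _)

theorem red_star (M : Lam) : Red M (star M) := by
  induction M with
  | var n => exact .refl
  | lam M ih => exact red_lam ih
  | app M N ihM ihN =>
    cases M with
    | var n => exact red_appR _ ihN
    | lam P =>
      have : Red (app (lam P) N) (app (lam (star P)) (star N)) := red_app ihM ihN
      exact this.tail (by simpa [star] using Step.beta (star P) (star N))
    | app A B => exact red_app ihM ihN

end Lam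

namespace Lam

theorem subst_star (A : Lam) (x : ℕ) (B : Lam) :
    Red ((star A).subst x (star B)) (star (A.subst x B)) := by
  cases A with
  | var n =>
    simp only [star, subst]
    split_ifs <;> (try simp only [star]) <;> exact .refl
  | lam P =>
    simp only [star, subst, ← star_lift]
    exact red_lam (subst_star P (x+1) (B.lift 0))
  | app A₁ Q =>
    cases A₁ with
    | var n =>
      by_cases h : n = x
      · subst h
        cases B with
        | var m =>
          simp only [star, subst, if_pos rfl]
          exact red_appR _ (subst_star Q n (var m))
        | lam L =>
          simp only [star, subst, if_pos rfl]
          exact (red_appR _ (subst_star Q n (lam L))).tail (Step.beta _ _)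
        | app B₁ B₂ =>
          simp only [star, subst, if_pos rfl]
          exact red_appR _ (subst_star Q n (app B₁ B₂))
      · by_cases h2 : x < n
        · simp only [star, subst, if_neg h, if_pos h2]
          exact red_appR _ (subst_star Q x B)
        · simp only [star, subst, if_neg h, if_neg h2]
          exact red_appR _ (subst_star Q x B)
    | lam P =>
      simp only [star, subst]
      rw [subst_subst (star P) 0 x (star Q) (star B) (Nat.zero_le x), ← star_lift]
      exact red_subst (subst_star P (x+1) (B.lift 0)) (subst_star Q x B) 0
    | app C D =>
      simp only [star, subst]
      exact red_app (subst_star (app C D) x B) (subst_star Q x B)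
termination_by A.size
decreasing_by all_goals (simp only [size]; omega)

theorem starApp_red {A B M' N' : Lam} (hA : Red A (star M')) (hB : Red B (star N')) :
    Red (app A B) (star (app M' N')) := by
  cases M' with
  | var n => exact red_app hA hB
  | lam L => exact (red_app hA hB).tail (Step.beta _ _)
  | app C D => exact red_app hA hB

theorem star_step_aux : ∀ (k : ℕ) (M N : Lam), M.size ≤ k → Step M N →
    Red (star M) (star N) := by
  intro k
  induction k with
  | zero => intro M N hle h; cases M <;> simp [size] at hle
  | succ k ih =>
  intro M N hle h
  cases M with
  | var n => nomatch h
  | lam P =>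
    cases h with
    | abs h₂ =>
      simp only [size] at hle
      exact red_lam (ih _ _ (by omega) h₂)
  | app M₁ N₁ =>
    cases M₁ with
    | var n =>
      cases h with
      | appL _ h₁ => nomatch h₁
      | appR _ h₁ => exact red_appR _ (ih _ _ (by simp [size] at hle; omega) h₁)
    | lam P =>
      simp only [size] at hle
      cases h with
      | beta => exact subst_star P 0 N₁
      | appL _ h₁ =>
        cases h₁ with
        | abs h₂ => exact red_subst (ih _ _ (by omega) h₂) .refl 0
      | appR _ h₁ => exact red_subst .refl (ih _ _ (by omega) h₁) 0
    | app A₁ A₂ =>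
      simp only [size] at hle
      cases h with
      | appL _ h₁ => exact starApp_red (ih _ _ (by simp only [size]; omega) h₁) .refl
      | appR _ h₁ => exact starApp_red .refl (ih _ _ (by omega) h₁)

theorem star_step (M N : Lam) (h : Step M N) : Red (star M) (star N) :=
  star_step_aux M.size M N le_rfl h

theorem step_red_star_aux : ∀ (k : ℕ) (M N : Lam), M.size ≤ k → Step M N →
    Red N (star M) := by
  intro k
  induction k with
  | zero => intro M N hle h; cases M <;> simp [size] at hle
  | succ k ih =>
  intro M N hle h
  cases M with
  | var n => nomatch h
  | lam P =>
    simp only [size] at hle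
    cases h with
    | abs h₂ => exact red_lam (ih _ _ (by omega) h₂)
  | app M₁ N₁ =>
    cases M₁ with
    | var n =>
      simp only [size] at hle
      cases h with
      | appL _ h₁ => nomatch h₁
      | appR _ h₁ => exact red_appR _ (ih _ _ (by omega) h₁)
    | lam P =>
      simp only [size] at hle
      cases h with
      | beta => exact red_subst (red_star P) (red_star N₁) 0
      | appL _ h₁ =>
        cases h₁ with
        | abs h₂ =>
          exact (red_app (red_lam (ih _ _ (by omega) h₂)) (red_star N₁)).tail
            (Step.beta _ _)
      | appR _ h₁ =>
        exact (red_app (red_lam (red_star P)) (ih _ _ (by omega) h₁)).tail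
          (Step.beta _ _)
    | app A₁ A₂ =>
      simp only [size] at hle
      cases h with
      | appL _ h₁ => exact red_app (ih _ _ (by simp only [size]; omega) h₁) (red_star N₁)
      | appR _ h₁ => exact red_app (red_star _) (ih _ _ (by omega) h₁)

theorem step_red_star (M N : Lam) (h : Step M N) : Red N (star M) :=
  step_red_star_aux M.size M N le_rfl h

theorem star_red {M N : Lam} (h : Red M N) : Red (star M) (star N) := by
  induction h with
  | refl => exact .refl
  | tail _ s ih => exact ih.trans (star_step _ _ s)

theorem iterStar_succ (n : ℕ) (M : Lam) : iterStar (n+1) M = star (iterStar n M) :=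
  Function.iterate_succ_apply' star n M

theorem red_iterStar {M N : Lam} (h : Red M N) (n : ℕ) :
    Red (iterStar n M) (iterStar n N) := by
  induction n with
  | zero => exact h
  | succ n ih => rw [iterStar_succ, iterStar_succ]; exact star_red ih

theorem red_iterStar_le (M : Lam) {n m : ℕ} (h : n ≤ m) :
    Red (iterStar n M) (iterStar m M) := by
  induction m with
  | zero =>
    have : n = 0 := by omega
    subst this; exact .refl
  | succ m ih =>
    rcases Nat.lt_or_ge n (m+1) with h1 | h1
    · rw [iterStar_succ]
      exact (ih (by omega)).trans (red_star _)
    · have : n = m + 1 := by omega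
      subst this; exact .refl

end Lam

namespace Lam

theorem segA (k : ℕ) (Ms : ℕ → Lam) (d : ℕ → Bool)
    (hzig : ∀ i < k, if d i then Step (Ms i) (Ms (i+1)) else Step (Ms (i+1)) (Ms i)) :
    ∀ n p, p + n ≤ k →
      Red (Ms p)
        (iterStar (((Finset.Ico p (p+n)).filter (fun i => d i = false)).card)
          (Ms (p+n))) := by
  intro n
  induction n with
  | zero =>
    intro p h
    simp only [Nat.add_zero, Finset.Ico_self, Finset.filter_empty, Finset.card_empty]
    exact .refl
  | succ n ih =>
    intro p h
    have hp : p < k := by omega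
    have hne : p ∉ Finset.Ico (p+1) (p+(n+1)) := by simp
    have hsplit : Finset.Ico p (p+(n+1)) = insert p (Finset.Ico (p+1) (p+(n+1))) :=
      (Finset.insert_Ico_add_one_left_eq_Ico (by omega)).symm
    have ih' := ih (p+1) (by omega)
    rw [show p + 1 + n = p + (n+1) by omega] at ih'
    cases hd : d p with
    | true =>
      have harr : Step (Ms p) (Ms (p+1)) := by simpa [hd] using hzig p hp
      have hcard : ((Finset.Ico p (p+(n+1))).filter (fun i => d i = false)).card
          = ((Finset.Ico (p+1) (p+(n+1))).filter (fun i => d i = false)).card := by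
        rw [hsplit, Finset.filter_insert]; simp [hd]
      rw [hcard]
      exact (Relation.ReflTransGen.single harr).trans ih'
    | false =>
      have harr : Step (Ms (p+1)) (Ms p) := by simpa [hd] using hzig p hp
      have hcard : ((Finset.Ico p (p+(n+1))).filter (fun i => d i = false)).card
          = ((Finset.Ico (p+1) (p+(n+1))).filter (fun i => d i = false)).card + 1 := by
        rw [hsplit, Finset.filter_insert]
        simp only [hd]
        rw [if_pos trivial,
          Finset.card_insert_of_notMem (fun hmem => hne (Finset.mem_of_mem_filter _ hmem))]
      rw [hcard, iterStar_succ]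
      exact (step_red_star _ _ harr).trans (star_red ih')

theorem segB (k : ℕ) (Ms : ℕ → Lam) (d : ℕ → Bool)
    (hzig : ∀ i < k, if d i then Step (Ms i) (Ms (i+1)) else Step (Ms (i+1)) (Ms i)) :
    ∀ n p, p + n ≤ k →
      Red (Ms (p+n))
        (iterStar (((Finset.Ico p (p+n)).filter (fun i => d i = true)).card)
          (Ms p)) := by
  intro n
  induction n with
  | zero =>
    intro p h
    simp only [Nat.add_zero, Finset.Ico_self, Finset.filter_empty, Finset.card_empty]
    exact .refl
  | succ n ih =>
    intro p h
    have hp : p + n < k := by omega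
    have hne : p + n ∉ Finset.Ico p (p+n) := by simp
    have hsplit : Finset.Ico p (p+(n+1)) = insert (p+n) (Finset.Ico p (p+n)) := by
      rw [show p + (n+1) = (p+n) + 1 by omega]
      exact Nat.Ico_succ_right_eq_insert_Ico (by omega)
    have ih' := ih p (by omega)
    rw [show p + (n+1) = (p+n) + 1 by omega]
    cases hd : d (p+n) with
    | true =>
      have harr : Step (Ms (p+n)) (Ms (p+n+1)) := by simpa [hd] using hzig (p+n) hp
      have hcard : ((Finset.Ico p (p+(n+1))).filter (fun i => d i = true)).card
          = ((Finset.Ico p (p+n)).filter (fun i => d i = true)).card + 1 := by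
        rw [hsplit, Finset.filter_insert]
        simp only [hd]
        rw [if_pos trivial,
          Finset.card_insert_of_notMem (fun hmem => hne (Finset.mem_of_mem_filter _ hmem))]
      rw [show (p+n) + 1 = p + (n+1) by omega, hcard, iterStar_succ]
      exact (step_red_star _ _ harr).trans (star_red ih')
    | false =>
      have harr : Step (Ms (p+n+1)) (Ms (p+n)) := by simpa [hd] using hzig (p+n) hp
      have hcard : ((Finset.Ico p (p+(n+1))).filter (fun i => d i = true)).card
          = ((Finset.Ico p (p+n)).filter (fun i => d i = true)).card := by
        rw [hsplit, Finset.filter_insert]; simp [hd]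
      rw [show (p+n) + 1 = p + (n+1) by omega, hcard]
      exact (Relation.ReflTransGen.single harr).trans ih'

end Lam



/-- every term of the zigzag reduces to the common reduct
(Ms r)^(m_l*), where the zigzag `Ms 0, …, Ms k` has directions `d i`
(`true` = forward `Ms i → Ms (i+1)`, `false` = backward `Ms (i+1) → Ms i`),
r is the total number of forward arrows and m_l the number of backward arrows
among the first r arrows. -/
theorem zigzag_common_reduct (k : ℕ) (Ms : ℕ → Lam) (d : ℕ → Bool)
    (hzig : ∀ i < k, if d i then Lam.Step (Ms i) (Ms (i+1))
                     else Lam.Step (Ms (i+1)) (Ms i)) :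
    ∀ r ml : ℕ,
      r = ((Finset.range k).filter (fun i => d i = true)).card →
      ml = ((Finset.range r).filter (fun i => d i = false)).card →
      ∀ i ≤ k, Lam.Red (Ms i) (Lam.iterStar ml (Ms r)) := by
  intro r ml hr hml i hi
  have hrk : r ≤ k := by
    rw [hr]
    calc ((Finset.range k).filter (fun i => d i = true)).card
        ≤ (Finset.range k).card := Finset.card_filter_le _ _
      _ = k := Finset.card_range k
  rcases Nat.le_total i r with hir | hir
  · have h1 := Lam.segA k Ms d hzig (r - i) i (by omega)
    rw [show i + (r - i) = r by omega] at h1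
    have hsub : ((Finset.Ico i r).filter (fun j => d j = false)).card ≤ ml := by
      rw [hml, Finset.range_eq_Ico]
      exact Finset.card_le_card
        (Finset.filter_subset_filter _ (Finset.Ico_subset_Ico (Nat.zero_le i) le_rfl))
    exact h1.trans (Lam.red_iterStar_le _ hsub)
  · have h1 := Lam.segB k Ms d hzig (i - r) r (by omega)
    rw [show r + (i - r) = i by omega] at h1
    have key : ((Finset.Ico r i).filter (fun j => d j = true)).card ≤ ml := by
      have h2 : ((Finset.Ico r i).filter (fun j => d j = true)).card
          ≤ ((Finset.Ico r k).filter (fun j => d j = true)).card :=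
        Finset.card_le_card
          (Finset.filter_subset_filter _ (Finset.Ico_subset_Ico le_rfl hi))
      have h3 : ((Finset.Ico 0 r).filter (fun j => d j = true)).card
          + ((Finset.Ico r k).filter (fun j => d j = true)).card = r := by
        rw [← Finset.card_union_of_disjoint
            (Finset.disjoint_filter_filter (Finset.Ico_disjoint_Ico_consecutive 0 r k)),
          ← Finset.filter_union,
          Finset.Ico_union_Ico_eq_Ico (Nat.zero_le r) hrk, ← Finset.range_eq_Ico, ← hr]
      have h4 := Finset.card_filter_add_card_filter_not
        (s := Finset.Ico 0 r) (p := fun j => d j = true)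
      simp only [Bool.not_eq_true, Nat.card_Ico, Nat.sub_zero] at h4
      have hml' : ml = ((Finset.Ico 0 r).filter (fun j => d j = false)).card := by
        rw [hml, Finset.range_eq_Ico]
      omega
    exact h1.trans (Lam.red_iterStar_le _ key)
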